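/- Let A(k), k ≥ 1, be n×n row-stochastic matrices satisfying: (1) positive entries uniformly bounded below by some α > 0; (2) for every k there exists K ≥ k such that Σ_{k'=k}^{K} A(k')·A(k'−1)···A(k) has all entries positive; (3) each A(k) is completely reducible; (4) there exists an aperiodic digraph H without sinks on node set {1,…,n} that is a subgraph of every G(A(k)). Then the backward products P(k) = A(k)·A(k−1)···A(1) converge entrywise to a row-stochastic matrix of rank 1. -/

import Mathlib

open Matrix Filter

/-- Row-stochastic matrix: nonnegative entries and row sums equal to 1. -/
def Stochastic {n : ℕ} (A : Matrix (Fin n) (Fin n) ℝ) : Prop :=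
  (∀ i j, 0 ≤ A i j) ∧ ∀ i, ∑ j, A i j = 1

/-- There is a walk of length `k` from `i` to `j` in the digraph with edge relation `E`. -/
def HasWalk {n : ℕ} (E : Fin n → Fin n → Prop) (i j : Fin n) (k : ℕ) : Prop :=
  ∃ f : ℕ → Fin n, f 0 = i ∧ f k = j ∧ ∀ m < k, E (f m) (f (m + 1))

/-- The gcd of the lengths of closed walks at `i` (which all stay inside the strongly
connected component of `i`) is 1.  Equivalently, the component of `i` is aperiodic. -/
def AperiodicAt {n : ℕ} (E : Fin n → Fin n → Prop) (i : Fin n) : Prop :=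
  ∀ d : ℕ, (∀ k, 0 < k → HasWalk E i i k → d ∣ k) → d = 1

/-- `backProd A l m = A (l+m) ⬝ A (l+m-1) ⬝ ⋯ ⬝ A (l+1)`, so that
`backProd A l (k-l)` is the partial product `P(k,l)` and `backProd A 0 k = P(k)`. -/
def backProd {n : ℕ} (A : ℕ → Matrix (Fin n) (Fin n) ℝ) (l : ℕ) : ℕ → Matrix (Fin n) (Fin n) ℝ
  | 0 => 1
  | m + 1 => A (l + m + 1) * backProd A l m

/-- Vector seminorm: sup-norm distance to the line spanned by the all-ones vector. -/
noncomputable def sn {n : ℕ} (x : Fin n → ℝ) : ℝ :=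
  ⨅ c : ℝ, ‖x - Function.const (Fin n) c‖

/-- Induced matrix seminorm `‖A‖ = sup { ‖Ax‖/‖x‖ : ‖x‖ ≠ 0 }`. -/
noncomputable def msn {n : ℕ} (A : Matrix (Fin n) (Fin n) ℝ) : ℝ :=
  sSup {r : ℝ | ∃ x : Fin n → ℝ, sn x ≠ 0 ∧ r = sn (A.mulVec x) / sn x}

/-- `mu P j` = minimum of the positive entries of column `j` of `P`. -/
noncomputable def mu {n : ℕ} (P : Matrix (Fin n) (Fin n) ℝ) (j : Fin n) : ℝ :=
  sInf {v : ℝ | ∃ i, 0 < P i j ∧ P i j = v}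

/-- Completely reducible: whenever `A i j > 0` there is a directed walk from `j`
back to `i` in `G(A)`; i.e. no edges between distinct strongly connected components. -/
def CompRed {n : ℕ} (A : Matrix (Fin n) (Fin n) ℝ) : Prop :=
  ∀ i j, 0 < A i j → ∃ k, HasWalk (fun a b => 0 < A a b) j i k


namespace Work


variable {n : ℕ}

/-! ### Basic facts about `Stochastic` and `backProd` -/

lemma stochastic_one : Stochastic (1 : Matrix (Fin n) (Fin n) ℝ) := by
  constructor
  · intro i j
    by_cases h : i = j <;> simp [Matrix.one_apply, h]
  · intro i
    simp [Matrix.one_apply]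

lemma stochastic_mul {A B : Matrix (Fin n) (Fin n) ℝ} (hA : Stochastic A) (hB : Stochastic B) :
    Stochastic (A * B) := by
  constructor
  · intro i j
    rw [Matrix.mul_apply]
    exact Finset.sum_nonneg fun c _ => mul_nonneg (hA.1 i c) (hB.1 c j)
  · intro i
    simp only [Matrix.mul_apply]
    rw [Finset.sum_comm]
    have : ∀ c ∈ Finset.univ, ∑ j : Fin n, A i c * B c j = A i c := by
      intro c _
      rw [← Finset.mul_sum, hB.2 c, mul_one]
    rw [Finset.sum_congr rfl this, hA.2 i]

lemma backProd_zero (A : ℕ → Matrix (Fin n) (Fin n) ℝ) (l : ℕ) : backProd A l 0 = 1 := rfl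

lemma backProd_succ (A : ℕ → Matrix (Fin n) (Fin n) ℝ) (l m : ℕ) :
    backProd A l (m + 1) = A (l + m + 1) * backProd A l m := rfl

lemma backProd_stochastic {A : ℕ → Matrix (Fin n) (Fin n) ℝ}
    (hA : ∀ k, 1 ≤ k → Stochastic (A k)) (l m : ℕ) : Stochastic (backProd A l m) := by
  induction m with
  | zero => exact stochastic_one
  | succ m ih => exact stochastic_mul (hA _ (by omega)) ih

lemma backProd_nonneg {A : ℕ → Matrix (Fin n) (Fin n) ℝ}
    (hA : ∀ k, 1 ≤ k → Stochastic (A k)) (l m : ℕ) (i j : Fin n) :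
    0 ≤ backProd A l m i j := (backProd_stochastic hA l m).1 i j

lemma backProd_add (A : ℕ → Matrix (Fin n) (Fin n) ℝ) (l a b : ℕ) :
    backProd A l (a + b) = backProd A (l + a) b * backProd A l a := by
  induction b with
  | zero => simp [backProd_zero]
  | succ b ih =>
    have h1 : a + (b + 1) = (a + b) + 1 := by omega
    have h2 : l + (a + b) + 1 = l + a + b + 1 := by omega
    rw [h1, backProd_succ, ih, h2, backProd_succ, Matrix.mul_assoc]

/-- lower bound an entry of a product by a single term -/
lemma mul_entry_le {A B : Matrix (Fin n) (Fin n) ℝ}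
    (hA : ∀ i j, 0 ≤ A i j) (hB : ∀ i j, 0 ≤ B i j) (i c j : Fin n) :
    A i c * B c j ≤ (A * B) i j := by
  rw [Matrix.mul_apply]
  exact Finset.single_le_sum (f := fun c => A i c * B c j)
    (fun c _ => mul_nonneg (hA i c) (hB c j)) (Finset.mem_univ c)

lemma mul_entry_pos {A B : Matrix (Fin n) (Fin n) ℝ}
    (hA : ∀ i j, 0 ≤ A i j) (hB : ∀ i j, 0 ≤ B i j) {i j : Fin n}
    (h : 0 < (A * B) i j) : ∃ c, 0 < A i c ∧ 0 < B c j := by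
  by_contra hc
  push_neg at hc
  have : (A * B) i j ≤ 0 := by
    rw [Matrix.mul_apply]
    apply Finset.sum_nonpos
    intro c _
    rcases lt_or_ge 0 (A i c) with h1 | h1
    · have := hc c h1
      have hBz : B c j = 0 := le_antisymm this (hB c j)
      simp [hBz]
    · have hAz : A i c = 0 := le_antisymm h1 (hA i c)
      simp [hAz]
  linarith


variable {n : ℕ} {E E' : Fin n → Fin n → Prop}

lemma hasWalk_zero (i : Fin n) : HasWalk E i i 0 := ⟨fun _ => i, rfl, rfl, by omega⟩

lemma hasWalk_zero_eq {i j : Fin n} (h : HasWalk E i j 0) : i = j := by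
  obtain ⟨f, h0, hk, _⟩ := h; rw [← h0, hk]

lemma hasWalk_single {i j : Fin n} (h : E i j) : HasWalk E i j 1 := by
  refine ⟨fun m => if m = 0 then i else j, by simp, by simp, ?_⟩
  intro m hm
  interval_cases m
  simpa using h

lemma hasWalk_concat {i j k : Fin n} {a b : ℕ}
    (h1 : HasWalk E i j a) (h2 : HasWalk E j k b) : HasWalk E i k (a + b) := by
  obtain ⟨f, hf0, hfa, hf⟩ := h1
  obtain ⟨g, hg0, hgb, hg⟩ := h2
  refine ⟨fun m => if m ≤ a then f m else g (m - a), ?_, ?_, ?_⟩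
  · simpa using hf0
  · by_cases hb : b = 0
    · subst hb; simpa [hfa, hgb, ← hg0] using hgb
    · have : ¬ (a + b ≤ a) := by omega
      simp only [this, if_false]
      rw [show a + b - a = b by omega, hgb]
  · intro m hm
    by_cases h1' : m + 1 ≤ a
    · have h2' : m ≤ a := by omega
      simp only [h1', h2', if_true]
      exact hf m (by omega)
    · by_cases h3 : m ≤ a
      · -- m = a, m+1 = a+1
        have hma : m = a := by omega
        simp only [h1', h3, if_true, if_false]
        subst hma
        rw [show m + 1 - m = 1 by omega]
        by_cases hb0 : b = 0
        · omega
        · have := hg 0 (by omega)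
          rw [hg0] at this
          rw [hfa]
          simpa using this
      · simp only [h1', h3, if_false]
        have : m - a + 1 = m + 1 - a := by omega
        rw [← this]
        exact hg (m - a) (by omega)

lemma hasWalk_tail {i j : Fin n} {m : ℕ} (h : HasWalk E i j (m + 1)) :
    ∃ c, E i c ∧ HasWalk E c j m := by
  obtain ⟨f, hf0, hfk, hf⟩ := h
  refine ⟨f 1, by rw [← hf0]; exact hf 0 (by omega), fun t => f (t + 1), rfl, by
    rw [← hfk], fun t ht => hf (t + 1) (by omega)⟩

lemma hasWalk_split {i j : Fin n} {m p : ℕ} (hp : p ≤ m) (h : HasWalk E i j m) :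
    ∃ c, HasWalk E i c p ∧ HasWalk E c j (m - p) := by
  obtain ⟨f, hf0, hfk, hf⟩ := h
  refine ⟨f p, ⟨f, hf0, rfl, fun t ht => hf t (by omega)⟩,
    ⟨fun t => f (t + p), by simp, ?_, ?_⟩⟩
  · show f (m - p + p) = j
    rw [show m - p + p = m by omega, hfk]
  · intro t ht
    show E (f (t + p)) (f (t + 1 + p))
    have := hf (t + p) (by omega)
    rwa [show t + p + 1 = t + 1 + p by omega] at this

/-- a walk from inside `P` to outside `P` must cross the boundary -/
lemma hasWalk_cross {P : Fin n → Prop} {i j : Fin n} {m : ℕ}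
    (h : HasWalk E i j m) (hi : P i) (hj : ¬ P j) :
    ∃ a b, P a ∧ ¬ P b ∧ E a b := by
  induction m generalizing i with
  | zero => exact absurd (hasWalk_zero_eq h ▸ hi) hj
  | succ m ih =>
    obtain ⟨c, hic, hcj⟩ := hasWalk_tail h
    by_cases hc : P c
    · exact ih hcj hc
    · exact ⟨i, c, hi, hc, hic⟩

lemma hasWalk_map {i j : Fin n} {m c : ℕ}
    (h : HasWalk E i j m) (hmap : ∀ x y, E x y → HasWalk E' x y c) :
    HasWalk E' i j (c * m) := by
  induction m generalizing i with
  | zero => rw [hasWalk_zero_eq h]; exact (by simpa using hasWalk_zero j)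
  | succ m ih =>
    obtain ⟨d, hid, hdj⟩ := hasWalk_tail h
    have := hasWalk_concat (hmap _ _ hid) (ih hdj)
    rwa [show c + c * m = c * (m + 1) by ring] at this




/-- an additively closed set of naturals containing 0: multiples stay inside -/
private lemma mul_mem_of_addclosed {P : ℕ → Prop} (h0 : P 0)
    (hadd : ∀ a b, P a → P b → P (a + b)) {x : ℕ} (hx : P x) (k : ℕ) : P (k * x) := by
  induction k with
  | zero => simpa using h0
  | succ k ih => rw [show (k+1)*x = k*x + x by ring]; exact hadd _ _ ih hx

lemma aperiodic_large_walks {i : Fin n} (hap : AperiodicAt E i) :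
    ∃ N, ∀ m, N ≤ m → HasWalk E i i m := by
  classical
  set P : ℕ → Prop := fun m => HasWalk E i i m with hP
  have h0 : P 0 := hasWalk_zero i
  have hadd : ∀ a b, P a → P b → P (a + b) := fun a b ha hb => hasWalk_concat ha hb
  -- there is a positive closed walk
  have hpos : ∃ k, 0 < k ∧ P k := by
    by_contra hno
    push_neg at hno
    have := hap 0 (fun k hk hw => absurd (hno k hk) (by simpa using hw))
    omega
  -- least positive "difference" g realized as a = b + g with a b ∈ P
  have hQ : ∃ g, 0 < g ∧ ∃ a b, P a ∧ P b ∧ a = b + g := by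
    obtain ⟨k, hk, hPk⟩ := hpos
    exact ⟨k, hk, k, 0, hPk, h0, by omega⟩
  set Q : ℕ → Prop := fun g => 0 < g ∧ ∃ a b, P a ∧ P b ∧ a = b + g with hQdef
  have hQex : ∃ g, Q g := hQ
  set g₀ := Nat.find hQex with hg₀
  obtain ⟨hg₀pos, a, b, hPa, hPb, hab⟩ := Nat.find_spec hQex
  rw [← hg₀] at hab hg₀pos
  -- g₀ divides every element of P
  have hdvd : ∀ k, P k → g₀ ∣ k := by
    intro k hPk
    by_contra hnd
    have hr : 0 < k % g₀ := by
      rcases Nat.eq_zero_or_pos (k % g₀) with h | h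
      · exact absurd (Nat.dvd_of_mod_eq_zero h) hnd
      · exact h
    set q := k / g₀ with hq
    set r := k % g₀ with hrr
    have hkeq : k = q * g₀ + r := by
      rw [hq, hrr, Nat.mul_comm]
      exact (Nat.div_add_mod k g₀).symm
    -- r is a difference: (k + q*b) = (q*a) + r
    have h1 : P (k + q * b) := hadd _ _ hPk (mul_mem_of_addclosed h0 hadd hPb q)
    have h2 : P (q * a) := mul_mem_of_addclosed h0 hadd hPa q
    have heq : k + q * b = q * a + r := by
      rw [hab, hkeq]; ring
    have hrQ : Q r := ⟨hr, _, _, h1, h2, heq⟩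
    have := Nat.find_min hQex (m := r) (by
      have : r < g₀ := Nat.mod_lt _ hg₀pos
      omega)
    exact this hrQ
  -- hence g₀ = 1
  have hg1 : g₀ = 1 := hap g₀ (fun k hk hw => hdvd k hw)
  rw [hg1] at hab
  -- now a = b + 1 with both in P : all m ≥ b*b are in P
  refine ⟨b * b, fun m hm => ?_⟩
  rcases Nat.eq_zero_or_pos b with hb0 | hbpos
  · -- b = 0 : a = 1 ∈ P, so P m for all m
    have : P 1 := by rw [hb0] at hab; simpa [hab] using hPa
    have := mul_mem_of_addclosed h0 hadd this m
    simpa using this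
  · set c := m / b with hc
    set r := m % b with hr
    have hmeq : m = c * b + r := by
      rw [hc, hr, Nat.mul_comm]
      exact (Nat.div_add_mod m b).symm
    have hrb : r < b := Nat.mod_lt _ hbpos
    have hcr : r ≤ c := by
      have : b ≤ c := by
        rw [hc]
        exact Nat.le_div_iff_mul_le hbpos |>.mpr (by nlinarith)
      omega
    have hdecomp : m = (c - r) * b + r * a := by
      rw [hab]
      have : r * (b + 1) = r * b + r := by ring
      rw [this]
      have h1 : (c - r) * b + (r * b + r) = (c - r + r) * b + r := by ring
      rw [h1, Nat.sub_add_cancel hcr]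
      omega
    rw [hdecomp]
    exact hadd _ _ (mul_mem_of_addclosed h0 hadd hPb _) (mul_mem_of_addclosed h0 hadd hPa _)


section Chain

variable {A : ℕ → Matrix (Fin n) (Fin n) ℝ} {H : Fin n → Fin n → Prop} {α : ℝ}

/-- entries of backward products along `H`-walks are at least `α ^ m` -/
lemma walk_entry_le (hstoch : ∀ k, 1 ≤ k → Stochastic (A k)) (hα : 0 ≤ α)
    (hsub : ∀ k, 1 ≤ k → ∀ i j, H i j → α ≤ A k i j)
    {m : ℕ} {i j : Fin n} (h : HasWalk H i j m) (l : ℕ) :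
    α ^ m ≤ backProd A l m i j := by
  induction m generalizing i with
  | zero =>
    rw [hasWalk_zero_eq h, backProd_zero]
    simp [Matrix.one_apply]
  | succ m ih =>
    obtain ⟨c, hic, hcj⟩ := hasWalk_tail h
    calc α ^ (m + 1) = α * α ^ m := by ring
    _ ≤ A (l + m + 1) i c * backProd A l m c j := by
        apply mul_le_mul (hsub _ (by omega) _ _ hic) (ih hcj) (pow_nonneg hα m)
        exact le_trans hα (hsub _ (by omega) _ _ hic)
    _ ≤ (A (l + m + 1) * backProd A l m) i j :=
        mul_entry_le (fun i j => (hstoch _ (by omega)).1 i j)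
          (fun i j => backProd_nonneg hstoch l m i j) i c j
    _ = backProd A l (m + 1) i j := rfl

/-- positive entries of backward products are at least `α ^ m` -/
lemma pos_entry_lb (hstoch : ∀ k, 1 ≤ k → Stochastic (A k))
    (hlb : ∀ k, 1 ≤ k → ∀ i j, 0 < A k i j → α ≤ A k i j) (hα : 0 ≤ α)
    {l m : ℕ} {i j : Fin n} (h : 0 < backProd A l m i j) :
    α ^ m ≤ backProd A l m i j := by
  induction m generalizing i with
  | zero =>
    rw [backProd_zero] at h ⊢
    have hij : i = j := by
      by_contra hne
      rw [Matrix.one_apply_ne hne] at h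
      exact lt_irrefl _ h
    subst hij
    simp [Matrix.one_apply]
  | succ m ih =>
    rw [backProd_succ] at h ⊢
    obtain ⟨c, hic, hcj⟩ := mul_entry_pos (fun i j => (hstoch _ (by omega)).1 i j)
      (fun i j => backProd_nonneg hstoch l m i j) h
    calc α ^ (m + 1) = α * α ^ m := by ring
    _ ≤ A (l + m + 1) i c * backProd A l m c j := by
        apply mul_le_mul (hlb _ (by omega) _ _ hic) (ih hcj) (pow_nonneg hα m)
        exact le_trans hα (hlb _ (by omega) _ _ hic)
    _ ≤ (A (l + m + 1) * backProd A l m) i j :=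
        mul_entry_le (fun i j => (hstoch _ (by omega)).1 i j)
          (fun i j => backProd_nonneg hstoch l m i j) i c j

lemma prod_path (hstoch : ∀ k, 1 ≤ k → Stochastic (A k))
    {l m : ℕ} {i j : Fin n} (h : 0 < backProd A l m i j) :
    ∃ f : ℕ → Fin n, f 0 = i ∧ f m = j ∧ ∀ s < m, 0 < A (l + m - s) (f s) (f (s + 1)) := by
  induction m generalizing i with
  | zero =>
    rw [backProd_zero] at h
    have hij : i = j := by
      by_contra hne
      rw [Matrix.one_apply_ne hne] at h
      exact lt_irrefl _ h
    exact ⟨fun _ => j, hij ▸ rfl, rfl, by omega⟩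
  | succ m ih =>
    rw [backProd_succ] at h
    obtain ⟨c, hic, hcj⟩ := mul_entry_pos (fun i j => (hstoch _ (by omega)).1 i j)
      (fun i j => backProd_nonneg hstoch l m i j) h
    obtain ⟨f', hf0, hfm, hf⟩ := ih hcj
    refine ⟨fun s => if s = 0 then i else f' (s - 1), by simp, by simp [hfm], ?_⟩
    intro s hs
    by_cases hs0 : s = 0
    · subst hs0
      simpa [hf0, add_assoc] using hic
    · have h1 : ¬ (s + 1 = 0) := by omega
      simp only [hs0, h1, if_false]
      have := hf (s - 1) (by omega)
      rw [show s + 1 - 1 = s - 1 + 1 by omega]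
      rwa [show l + (m + 1) - s = l + m - (s - 1) by omega]

end Chain

section Win

variable {A : ℕ → Matrix (Fin n) (Fin n) ℝ} {H : Fin n → Fin n → Prop} {α : ℝ}

lemma exists_T0 (hap : ∀ i : Fin n, AperiodicAt H i) :
    ∃ T, 1 ≤ T ∧ ∀ (i : Fin n) (m : ℕ), T ≤ m → HasWalk H i i m := by
  have h := fun i => aperiodic_large_walks (hap i)
  choose N hN using h
  refine ⟨max 1 (Finset.univ.sup N), le_max_left _ _, fun i m hm => ?_⟩
  apply hN i
  exact le_trans (le_trans (Finset.le_sup (Finset.mem_univ i)) (le_max_right _ _)) hm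

/-- all sufficiently long backward windows starting right after `l₀` are entrywise positive -/
lemma win (hstoch : ∀ k, 1 ≤ k → Stochastic (A k)) (hα : 0 < α)
    (hsub : ∀ k, 1 ≤ k → ∀ i j, H i j → α ≤ A k i j)
    (hep : ∀ k, 1 ≤ k → ∃ K, k ≤ K ∧
      ∀ i j, 0 < (∑ k' ∈ Finset.Icc k K, backProd A (k - 1) (k' + 1 - k)) i j)
    {T : ℕ} (hT : ∀ (i : Fin n) (m : ℕ), T ≤ m → HasWalk H i i m)
    (l₀ : ℕ) :
    ∃ κ, l₀ ≤ κ ∧ ∀ K, κ ≤ K → ∀ i j, 0 < backProd A l₀ (K - l₀) i j := by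
  obtain ⟨K₀, hK₀, hpos⟩ := hep (l₀ + 1) (by omega)
  -- for each pair, some partial product entry is positive
  have hex : ∀ i j : Fin n, ∃ k', l₀ + 1 ≤ k' ∧ k' ≤ K₀ ∧ 0 < backProd A l₀ (k' - l₀) i j := by
    intro i j
    have h := hpos i j
    rw [show l₀ + 1 - 1 = l₀ by omega] at h
    rw [Matrix.sum_apply] at h
    by_contra hc
    push_neg at hc
    have : (∑ k' ∈ Finset.Icc (l₀ + 1) K₀, backProd A l₀ (k' + 1 - (l₀ + 1)) i j) ≤ 0 := by
      apply Finset.sum_nonpos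
      intro k' hk'
      rw [Finset.mem_Icc] at hk'
      rw [show k' + 1 - (l₀ + 1) = k' - l₀ by omega]
      exact hc k' hk'.1 hk'.2
    linarith
  choose kf hkf1 hkf2 hkf3 using hex
  set κ := (Finset.univ.sup fun p : Fin n × Fin n => kf p.1 p.2) + T + l₀ + 1 with hκ
  refine ⟨κ, by omega, fun K hK i j => ?_⟩
  have hkfle : kf i j ≤ Finset.univ.sup fun p : Fin n × Fin n => kf p.1 p.2 :=
    Finset.le_sup (f := fun p : Fin n × Fin n => kf p.1 p.2) (Finset.mem_univ (i, j))
  have hb1 := hkf1 i j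
  have hb2 := hkf2 i j
  have hsplit : K - l₀ = (kf i j - l₀) + (K - kf i j) := by omega
  rw [hsplit, backProd_add]
  have hmid : l₀ + (kf i j - l₀) = kf i j := by omega
  rw [hmid]
  have h1 : 0 < backProd A (kf i j) (K - kf i j) i i := by
    have hw : HasWalk H i i (K - kf i j) := hT i _ (by omega)
    calc (0:ℝ) < α ^ (K - kf i j) := pow_pos hα _
    _ ≤ _ := walk_entry_le hstoch (le_of_lt hα) hsub hw (kf i j)
  calc (0:ℝ) < backProd A (kf i j) (K - kf i j) i i * backProd A l₀ (kf i j - l₀) i j :=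
        mul_pos h1 (hkf3 i j)
  _ ≤ _ := mul_entry_le (fun a b => backProd_nonneg hstoch _ _ a b)
        (fun a b => backProd_nonneg hstoch _ _ a b) i i j

end Win

/-- the window chain: `WC A T t` is the product of `A` over the window `(T(t-1), Tt]`. -/
def WC (A : ℕ → Matrix (Fin n) (Fin n) ℝ) (T : ℕ) : ℕ → Matrix (Fin n) (Fin n) ℝ :=
  fun t => backProd A (T * (t - 1)) T

section WChain

variable {A : ℕ → Matrix (Fin n) (Fin n) ℝ} {H : Fin n → Fin n → Prop} {α : ℝ} {T : ℕ}

lemma wc_backProd (A : ℕ → Matrix (Fin n) (Fin n) ℝ) (T l m : ℕ) :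
    backProd (WC A T) l m = backProd A (T * l) (T * m) := by
  induction m with
  | zero => simp [backProd_zero]
  | succ m ih =>
    rw [backProd_succ, ih, show T * (m + 1) = T * m + T by ring, backProd_add]
    congr 1
    show backProd A (T * (l + m + 1 - 1)) T = backProd A (T * l + T * m) T
    rw [show l + m + 1 - 1 = l + m by omega, Nat.mul_add]

lemma wc_stochastic (hstoch : ∀ k, 1 ≤ k → Stochastic (A k)) (t : ℕ) :
    Stochastic (WC A T t) := backProd_stochastic hstoch _ _

lemma wc_diag (hstoch : ∀ k, 1 ≤ k → Stochastic (A k)) (hα : 0 < α)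
    (hsub : ∀ k, 1 ≤ k → ∀ i j, H i j → α ≤ A k i j)
    (hT : ∀ (i : Fin n) (m : ℕ), T ≤ m → HasWalk H i i m) (t : ℕ) (i : Fin n) :
    0 < WC A T t i i := by
  have hw : HasWalk H i i T := hT i T le_rfl
  calc (0:ℝ) < α ^ T := pow_pos hα _
  _ ≤ _ := walk_entry_le hstoch (le_of_lt hα) hsub hw _

lemma wc_lb (hstoch : ∀ k, 1 ≤ k → Stochastic (A k)) (hα : 0 < α)
    (hlb : ∀ k, 1 ≤ k → ∀ i j, 0 < A k i j → α ≤ A k i j)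
    (t : ℕ) (i j : Fin n) (h : 0 < WC A T t i j) : α ^ T ≤ WC A T t i j :=
  pos_entry_lb hstoch hlb (le_of_lt hα) h

/-- Core claim: any single positive entry of a matrix inside the window produces a
3-step walk in the graph of the window product. -/
lemma wc_core (hstoch : ∀ k, 1 ≤ k → Stochastic (A k)) (hα : 0 < α)
    (hsub : ∀ k, 1 ≤ k → ∀ i j, H i j → α ≤ A k i j)
    (hT : ∀ (i : Fin n) (m : ℕ), T ≤ m → HasWalk H i i m)
    {t r : ℕ} (ht : 1 ≤ t) (hr1 : T * (t - 1) < r) (hr2 : r ≤ T * t)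
    {a b : Fin n} (hab : 0 < A r a b) :
    HasWalk (fun x y => 0 < WC A T t x y) a b 3 := by
  set l₀ := T * (t - 1) with hl₀
  have hTt : T * t = l₀ + T := by
    rw [hl₀]
    have : t - 1 + 1 = t := by omega
    calc T * t = T * (t - 1 + 1) := by rw [this]
    _ = T * (t-1) + T := by ring
  set d := T * t - r with hd
  set e := r - l₀ - 1 with he
  have hdeT : e + (1 + d) = T := by omega
  have hre : r = l₀ + e + 1 := by omega
  -- closed walks and split points
  obtain ⟨z, haz, hza⟩ := hasWalk_split (E := H) (m := T + d) (p := T) (by omega)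
    (hT a (T + d) (by omega))
  rw [show T + d - T = d by omega] at hza
  obtain ⟨q, hbq, hqb⟩ := hasWalk_split (E := H) (m := e + T) (p := e) (by omega)
    (hT b (e + T) (by omega))
  rw [show e + T - e = T by omega] at hqb
  -- edge 1 : a → z
  have h1 : 0 < WC A T t a z := by
    calc (0:ℝ) < α ^ T := pow_pos hα _
    _ ≤ _ := walk_entry_le hstoch (le_of_lt hα) hsub haz _
  -- edge 3 : q → b
  have h3 : 0 < WC A T t q b := by
    calc (0:ℝ) < α ^ T := pow_pos hα _
    _ ≤ _ := walk_entry_le hstoch (le_of_lt hα) hsub hqb _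
  -- edge 2 : z → q, using the crossing edge a→b at time r
  have h2 : 0 < WC A T t z q := by
    have hdecomp : WC A T t = (backProd A (l₀ + e + 1) d * backProd A (l₀ + e) 1) *
        backProd A l₀ e := by
      show backProd A l₀ T = _
      rw [← hdeT, backProd_add, backProd_add]
    have hA1 : backProd A (l₀ + e) 1 = A (l₀ + e + 1) := by
      rw [backProd_succ, backProd_zero, mul_one]
    have hXnn : ∀ i j, 0 ≤ backProd A (l₀ + e + 1) d i j :=
      fun i j => backProd_nonneg hstoch _ _ i j
    have hYnn : ∀ i j, (0:ℝ) ≤ A (l₀ + e + 1) i j := (hstoch _ (by omega)).1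
    have hZnn : ∀ i j, 0 ≤ backProd A l₀ e i j :=
      fun i j => backProd_nonneg hstoch _ _ i j
    have hXY : 0 < (backProd A (l₀ + e + 1) d * backProd A (l₀ + e) 1) z b := by
      rw [hA1]
      have hXza : α ^ d ≤ backProd A (l₀ + e + 1) d z a :=
        walk_entry_le hstoch (le_of_lt hα) hsub hza _
      have hab' : 0 < A (l₀ + e + 1) a b := by rwa [← hre]
      calc (0:ℝ) < backProd A (l₀ + e + 1) d z a * A (l₀ + e + 1) a b :=
            mul_pos (lt_of_lt_of_le (pow_pos hα d) hXza) hab'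
      _ ≤ _ := mul_entry_le hXnn hYnn z a b
    have hZbq : 0 < backProd A l₀ e b q := by
      calc (0:ℝ) < α ^ e := pow_pos hα _
      _ ≤ _ := walk_entry_le hstoch (le_of_lt hα) hsub hbq _
    rw [hdecomp]
    have hXYnn : ∀ i j, 0 ≤ (backProd A (l₀ + e + 1) d * backProd A (l₀ + e) 1) i j := by
      intro i j
      rw [hA1]
      rw [Matrix.mul_apply]
      exact Finset.sum_nonneg fun c _ => mul_nonneg (hXnn i c) (hYnn c j)
    calc (0:ℝ) < (backProd A (l₀ + e + 1) d * backProd A (l₀ + e) 1) z b *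
          backProd A l₀ e b q := mul_pos hXY hZbq
    _ ≤ _ := mul_entry_le hXYnn hZnn z b q
  -- put the three edges together
  have w12 := hasWalk_concat (hasWalk_single (E := fun x y => 0 < WC A T t x y) h1)
    (hasWalk_single (E := fun x y => 0 < WC A T t x y) h2)
  have w123 := hasWalk_concat w12 (hasWalk_single (E := fun x y => 0 < WC A T t x y) h3)
  exact w123

lemma wc_compred (hstoch : ∀ k, 1 ≤ k → Stochastic (A k)) (hα : 0 < α)
    (hlb : ∀ k, 1 ≤ k → ∀ i j, 0 < A k i j → α ≤ A k i j)
    (hsub : ∀ k, 1 ≤ k → ∀ i j, H i j → α ≤ A k i j)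
    (hcr : ∀ k, 1 ≤ k → CompRed (A k))
    (hT : ∀ (i : Fin n) (m : ℕ), T ≤ m → HasWalk H i i m)
    {t : ℕ} (ht : 1 ≤ t) : CompRed (WC A T t) := by
  intro u v huv
  set l₀ := T * (t - 1) with hl₀
  have hTt : T * t = l₀ + T := by
    rw [hl₀]
    have h1 : t - 1 + 1 = t := by omega
    calc T * t = T * (t - 1 + 1) := by rw [h1]
    _ = T * (t-1) + T := by ring
  obtain ⟨f, hf0, hfT, hf⟩ := prod_path hstoch (l := l₀) (m := T) huv
  -- build a reverse walk from f s back to u, by induction on s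
  have key : ∀ s, s ≤ T → ∃ k, HasWalk (fun x y => 0 < WC A T t x y) (f s) u k := by
    intro s hs
    induction s with
    | zero => exact ⟨0, by rw [hf0]; exact hasWalk_zero u⟩
    | succ s ih =>
      obtain ⟨k, hk⟩ := ih (by omega)
      have hedge := hf s (by omega)
      have hr1 : l₀ < l₀ + T - s := by omega
      have hr2 : l₀ + T - s ≤ T * t := by omega
      have hrpos : 1 ≤ l₀ + T - s := by omega
      obtain ⟨k', hk'⟩ := hcr _ hrpos _ _ hedge
      have hmap : HasWalk (fun x y => 0 < WC A T t x y) (f (s+1)) (f s) (3 * k') :=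
        hasWalk_map hk' (fun x y hxy =>
          wc_core hstoch hα hsub hT ht (by omega) (by omega) hxy)
      exact ⟨3 * k' + k, hasWalk_concat hmap hk⟩
  obtain ⟨k, hk⟩ := key T le_rfl
  exact ⟨k, hfT ▸ hk⟩

lemma wc_win (hstoch : ∀ k, 1 ≤ k → Stochastic (A k)) (hα : 0 < α)
    (hsub : ∀ k, 1 ≤ k → ∀ i j, H i j → α ≤ A k i j)
    (hep : ∀ k, 1 ≤ k → ∃ K, k ≤ K ∧
      ∀ i j, 0 < (∑ k' ∈ Finset.Icc k K, backProd A (k - 1) (k' + 1 - k)) i j)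
    (hT1 : 1 ≤ T) (hT : ∀ (i : Fin n) (m : ℕ), T ≤ m → HasWalk H i i m)
    (l : ℕ) :
    ∃ M, l ≤ M ∧ ∀ M', M ≤ M' → ∀ i j, 0 < backProd (WC A T) l (M' - l) i j := by
  obtain ⟨κ, hκ1, hκ⟩ := win hstoch hα hsub hep hT (T * l)
  refine ⟨max (l + 1) κ, by omega, fun M' hM' i j => ?_⟩
  rw [wc_backProd]
  have h1 : T * M' ≥ κ := by
    have h2 : M' ≥ κ := le_trans (le_max_right _ _) hM'
    calc κ ≤ M' := h2
    _ ≤ T * M' := Nat.le_mul_of_pos_left M' (by omega)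
  have h3 : l ≤ M' := by
    have := le_trans (le_max_left _ _) hM'; omega
  obtain ⟨c, rfl⟩ := Nat.exists_eq_add_of_le h3
  rw [show l + c - l = c by omega]
  have := hκ (T * (l + c)) h1 i j
  rwa [show T * (l + c) - T * l = T * c by rw [Nat.mul_add]; omega] at this

end WChain

lemma entry_le_one {M : Matrix (Fin n) (Fin n) ℝ} (h : Stochastic M) (i j : Fin n) :
    M i j ≤ 1 := by
  calc M i j ≤ ∑ c, M i c :=
    Finset.single_le_sum (fun c _ => h.1 i c) (Finset.mem_univ j)
  _ = 1 := h.2 i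

section PhaseB

variable {C : ℕ → Matrix (Fin n) (Fin n) ℝ} {β : ℝ}

/-- existence of an absolute probability sequence for the chain `C` -/
lemma exists_aps (hn : 0 < n) (hst : ∀ t, 1 ≤ t → Stochastic (C t)) :
    ∃ lam : ℕ → Fin n → ℝ, (∀ t i, 0 ≤ lam t i) ∧ (∀ t, ∑ i, lam t i = 1) ∧
      (∀ t j, lam t j = ∑ i, lam (t + 1) i * C (t + 1) i j) := by
  classical
  have hn' : (0:ℝ) < (n:ℝ) := by exact_mod_cast hn
  set v : ℕ → ℕ → Fin n → ℝ :=
    fun K t j => if t < K then ∑ i, (n:ℝ)⁻¹ * backProd C t (K - t) i j else (n:ℝ)⁻¹ with hv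
  have hv01 : ∀ K t j, v K t j ∈ Set.Icc (0:ℝ) 1 := by
    intro K t j
    simp only [hv]
    by_cases h : t < K
    · simp only [h, if_true]
      constructor
      · exact Finset.sum_nonneg fun i _ => mul_nonneg (by positivity)
          (backProd_nonneg hst _ _ i j)
      · calc (∑ i, (n:ℝ)⁻¹ * backProd C t (K - t) i j)
            ≤ ∑ _i : Fin n, (n:ℝ)⁻¹ * 1 := by
              apply Finset.sum_le_sum
              intro i _
              exact mul_le_mul_of_nonneg_left
                (entry_le_one (backProd_stochastic hst _ _) i j) (by positivity)
        _ = (n:ℝ) * ((n:ℝ)⁻¹ * 1) := by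
              rw [Finset.sum_const, Finset.card_univ, Fintype.card_fin, nsmul_eq_mul]
        _ = 1 := by field_simp
    · simp only [h, if_false]
      constructor
      · positivity
      · rw [inv_le_one_iff₀]
        right
        exact_mod_cast hn
  have hvsum : ∀ K t, ∑ j, v K t j = 1 := by
    intro K t
    simp only [hv]
    by_cases h : t < K
    · simp only [h, if_true]
      rw [Finset.sum_comm]
      have h2 : ∀ i ∈ Finset.univ, ∑ j : Fin n, (n:ℝ)⁻¹ * backProd C t (K - t) i j
          = (n:ℝ)⁻¹ := by
        intro i _
        rw [← Finset.mul_sum, (backProd_stochastic hst _ _).2 i, mul_one]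
      rw [Finset.sum_congr rfl h2, Finset.sum_const, Finset.card_univ, Fintype.card_fin,
        nsmul_eq_mul]
      field_simp
    · simp only [h, if_false]
      rw [Finset.sum_const, Finset.card_univ, Fintype.card_fin, nsmul_eq_mul]
      field_simp
  have hvrec : ∀ K t j, t < K → v K t j = ∑ c, v K (t + 1) c * C (t + 1) c j := by
    intro K t j htK
    have hbp1 : backProd C t 1 = C (t + 1) := by
      rw [backProd_succ, backProd_zero, mul_one]
    by_cases h1 : t + 1 < K
    · simp only [hv, htK, h1, if_true]
      have hKt : K - t = 1 + (K - (t+1)) := by omega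
      rw [hKt, backProd_add, hbp1]
      have h2 : ∀ i ∈ Finset.univ,
          (n:ℝ)⁻¹ * (backProd C (t + 1) (K - (t+1)) * C (t + 1)) i j
          = ∑ c, (n:ℝ)⁻¹ * backProd C (t+1) (K - (t+1)) i c * C (t+1) c j := by
        intro i _
        rw [Matrix.mul_apply, Finset.mul_sum]
        apply Finset.sum_congr rfl
        intro c _
        ring
      rw [Finset.sum_congr rfl h2, Finset.sum_comm]
      apply Finset.sum_congr rfl
      intro c _
      rw [Finset.sum_mul]
    · have hK : K = t + 1 := by omega
      simp only [hv, htK, h1, if_true, if_false]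
      subst hK
      rw [show t + 1 - t = 1 by omega, hbp1]
  -- take an ultrafilter limit
  set U : Ultrafilter ℕ := Ultrafilter.of atTop with hU
  have hUle : (U : Filter ℕ) ≤ atTop := Ultrafilter.of_le atTop
  have hlim : ∀ t j, ∃ x ∈ Set.Icc (0:ℝ) 1,
      Tendsto (fun K => v K t j) (U : Filter ℕ) (nhds x) := by
    intro t j
    have hc : IsCompact (Set.Icc (0:ℝ) 1) := isCompact_Icc
    have hle : (U.map (fun K => v K t j) : Filter ℝ) ≤ Filter.principal (Set.Icc 0 1) := by
      rw [Ultrafilter.coe_map, Filter.le_principal_iff, Filter.mem_map]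
      filter_upwards with K using hv01 K t j
    obtain ⟨x, hx, hxle⟩ := hc.ultrafilter_le_nhds (U.map (fun K => v K t j)) hle
    exact ⟨x, hx, by rwa [Filter.Tendsto, ← Ultrafilter.coe_map]⟩
  choose lam hlam01 hlamT using hlim
  refine ⟨fun t j => lam t j, fun t i => (hlam01 t i).1, ?_, ?_⟩
  · intro t
    have h1 : Tendsto (fun K => ∑ j, v K t j) (U : Filter ℕ) (nhds (∑ j, lam t j)) :=
      tendsto_finset_sum _ (fun j _ => hlamT t j)
    have h2 : Tendsto (fun K => ∑ j, v K t j) (U : Filter ℕ) (nhds 1) := by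
      have h3 : (fun K => ∑ j, v K t j) = fun _ => (1:ℝ) := by
        funext K; exact hvsum K t
      rw [h3]
      exact tendsto_const_nhds
    exact tendsto_nhds_unique h1 h2
  · intro t j
    have h1 : Tendsto (fun K => v K t j) (U : Filter ℕ) (nhds (lam t j)) := hlamT t j
    have h2 : Tendsto (fun K => ∑ c, v K (t+1) c * C (t+1) c j) (U : Filter ℕ)
        (nhds (∑ c, lam (t+1) c * C (t+1) c j)) :=
      tendsto_finset_sum _ (fun c _ => (hlamT (t+1) c).mul_const _)
    have heq : (fun K => v K t j) =ᶠ[(U : Filter ℕ)]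
        (fun K => ∑ c, v K (t+1) c * C (t+1) c j) := by
      have h3 : ∀ᶠ K in atTop, t < K := Filter.eventually_gt_atTop t
      filter_upwards [hUle h3] with K hK using hvrec K t j hK
    exact tendsto_nhds_unique (h1.congr' heq) h2

end PhaseB

section PhaseB2

variable {C : ℕ → Matrix (Fin n) (Fin n) ℝ} {β : ℝ}

/-- if `S` never receives from outside after time `t`, products have a zero block -/
lemma closed_zero_block (hst : ∀ t, 1 ≤ t → Stochastic (C t)) {S : Finset (Fin n)} {t : ℕ}
    (hcl : ∀ s, t < s → ∀ u j, u ∉ S → j ∈ S → ¬ 0 < C s u j) :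
    ∀ m (u j : Fin n), u ∉ S → j ∈ S → backProd C t m u j = 0 := by
  intro m
  induction m with
  | zero =>
    intro u j hu hj
    rw [backProd_zero, Matrix.one_apply_ne]
    rintro rfl
    exact hu hj
  | succ m ih =>
    intro u j hu hj
    rw [backProd_succ, Matrix.mul_apply]
    apply Finset.sum_eq_zero
    intro c _
    by_cases hc : c ∈ S
    · have h0 : C (t + m + 1) u c = 0 :=
        le_antisymm (not_lt.mp (hcl (t + m + 1) (by omega) u c hu hc))
          ((hst (t + m + 1) (by omega)).1 u c)
      rw [h0, zero_mul]
    · rw [ih c j hc hj, mul_zero]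

/-- some later step must bring mass from outside `S` into `S` -/
lemma exists_open_step (hst : ∀ t, 1 ≤ t → Stochastic (C t))
    (hwin : ∀ l, ∃ M, l ≤ M ∧ ∀ M', M ≤ M' → ∀ i j, 0 < backProd C l (M' - l) i j)
    {S : Finset (Fin n)} (hne : S.Nonempty) (hproper : S ≠ Finset.univ) (t : ℕ) :
    ∃ s, t < s ∧ ∃ u j, u ∉ S ∧ j ∈ S ∧ 0 < C s u j := by
  by_contra hno
  push_neg at hno
  have hcl : ∀ s, t < s → ∀ u j, u ∉ S → j ∈ S → ¬ 0 < C s u j :=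
    fun s hs u j hu hj => not_lt.mpr (hno s hs u j hu hj)
  have hu : ∃ u, u ∉ S := by
    by_contra h
    push_neg at h
    exact hproper (Finset.eq_univ_iff_forall.mpr h)
  obtain ⟨u₀, hu₀⟩ := hu
  obtain ⟨j₀, hj₀⟩ := hne
  obtain ⟨M, hM1, hM2⟩ := hwin t
  have hpos := hM2 M le_rfl u₀ j₀
  rw [closed_zero_block hst hcl (M - t) u₀ j₀ hu₀ hj₀] at hpos
  exact lt_irrefl _ hpos

/-- if no mass enters `S` at step `s`, then (by complete reducibility) no mass leaves
`S` either, and the `lam`-mass of `S` is preserved -/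
lemma closed_single_step (hst : ∀ t, 1 ≤ t → Stochastic (C t))
    (hcrC : ∀ t, 1 ≤ t → CompRed (C t))
    {lam : ℕ → Fin n → ℝ} (hnn : ∀ t i, 0 ≤ lam t i)
    (hrec : ∀ t j, lam t j = ∑ i, lam (t + 1) i * C (t + 1) i j)
    {S : Finset (Fin n)} {r : ℕ}
    (hncl : ¬ ∃ u j, u ∉ S ∧ j ∈ S ∧ 0 < C (r + 1) u j) :
    ∑ j ∈ S, lam r j = ∑ j ∈ S, lam (r + 1) j := by
  classical
  have hnn' := (hst (r+1) (by omega)).1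
  -- rows of members of S stay in S
  have hrow : ∀ u ∈ S, ∀ j, j ∉ S → C (r + 1) u j = 0 := by
    intro u hu j hj
    by_contra hne
    have hpos : 0 < C (r + 1) u j := lt_of_le_of_ne (hnn' u j) (Ne.symm hne)
    obtain ⟨k, hk⟩ := hcrC (r + 1) (by omega) u j hpos
    obtain ⟨a, b, ha, hb, hab⟩ := hasWalk_cross (P := fun x => x ∉ S) hk hj
      (by simpa using hu)
    exact hncl ⟨a, b, ha, by simpa using hb, hab⟩
  have hcol : ∀ u, u ∉ S → ∀ j, j ∈ S → C (r + 1) u j = 0 := by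
    intro u hu j hj
    by_contra hne
    exact hncl ⟨u, j, hu, hj, lt_of_le_of_ne (hnn' u j) (Ne.symm hne)⟩
  calc ∑ j ∈ S, lam r j = ∑ j ∈ S, ∑ i, lam (r + 1) i * C (r + 1) i j := by
        apply Finset.sum_congr rfl
        intro j _
        exact hrec r j
  _ = ∑ i, lam (r + 1) i * ∑ j ∈ S, C (r + 1) i j := by
        rw [Finset.sum_comm]
        apply Finset.sum_congr rfl
        intro i _
        rw [Finset.mul_sum]
  _ = ∑ i ∈ S, lam (r + 1) i * ∑ j ∈ S, C (r + 1) i j := by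
        symm
        apply Finset.sum_subset (Finset.subset_univ S)
        intro i _ hi
        have h0 : ∑ j ∈ S, C (r + 1) i j = 0 :=
          Finset.sum_eq_zero fun j hj => hcol i hi j hj
        rw [h0, mul_zero]
  _ = ∑ j ∈ S, lam (r + 1) j := by
        apply Finset.sum_congr rfl
        intro i hi
        have h1 : ∑ j ∈ S, C (r + 1) i j = 1 := by
          have h2 : ∑ j ∈ S, C (r + 1) i j = ∑ j, C (r + 1) i j := by
            apply Finset.sum_subset (Finset.subset_univ S)
            intro j _ hj
            exact hrow i hi j hj
          rw [h2, (hst (r+1) (by omega)).2 i]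
        rw [h1, mul_one]

/-- uniform positivity of the absolute probability sequence -/
lemma lam_mass_ge (hn : 0 < n) (hst : ∀ t, 1 ≤ t → Stochastic (C t)) (hβ : 0 < β)
    (hβ1 : β ≤ 1)
    (hlbC : ∀ t, 1 ≤ t → ∀ i j, 0 < C t i j → β ≤ C t i j)
    (hdg : ∀ t, 1 ≤ t → ∀ i, 0 < C t i i)
    (hcrC : ∀ t, 1 ≤ t → CompRed (C t))
    (hwin : ∀ l, ∃ M, l ≤ M ∧ ∀ M', M ≤ M' → ∀ i j, 0 < backProd C l (M' - l) i j)
    {lam : ℕ → Fin n → ℝ} (hnn : ∀ t i, 0 ≤ lam t i) (hsum : ∀ t, ∑ i, lam t i = 1)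
    (hrec : ∀ t j, lam t j = ∑ i, lam (t + 1) i * C (t + 1) i j) :
    ∀ (k t : ℕ) (S : Finset (Fin n)), S.Nonempty → n ≤ S.card + k →
      β ^ k ≤ ∑ i ∈ S, lam t i := by
  classical
  intro k
  induction k with
  | zero =>
    intro t S hne hcard
    have hS : S = Finset.univ := by
      apply Finset.eq_univ_of_card
      have := Finset.card_le_univ S
      simp only [Finset.card_univ, Fintype.card_fin] at this ⊢
      omega
    rw [hS, pow_zero, hsum t]
  | succ k ih =>
    intro t S hne hcard
    by_cases hproper : S = Finset.univ
    · rw [hproper, hsum t]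
      exact pow_le_one₀ (le_of_lt hβ) hβ1
    · -- find the least open step after t
      have hex := exists_open_step hst hwin hne hproper t
      set Q : ℕ → Prop := fun s => t < s ∧ ∃ u j, u ∉ S ∧ j ∈ S ∧ 0 < C s u j with hQ
      have hexQ : ∃ s, Q s := hex
      set s₀ := Nat.find hexQ with hs₀
      obtain ⟨hts₀, u₀, j₀, hu₀, hj₀, hpos₀⟩ := Nat.find_spec hexQ
      rw [← hs₀] at hts₀ hpos₀
      -- plateau: mass constant from t to s₀ - 1
      have hplateau : ∀ m, t + m ≤ s₀ - 1 → ∑ i ∈ S, lam t i = ∑ i ∈ S, lam (t + m) i := by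
        intro m
        induction m with
        | zero => intro _; rfl
        | succ m ihm =>
          intro hm
          have h1 := ihm (by omega)
          rw [h1, show t + (m + 1) = (t + m) + 1 by omega]
          apply closed_single_step hst hcrC hnn hrec
          intro hop
          have hQtm : Q (t + m + 1) := ⟨by omega, hop⟩
          have := Nat.find_min hexQ (m := t + m + 1) (by omega)
          exact this hQtm
      have hs₀1 : t ≤ s₀ - 1 := by omega
      have hplat := hplateau (s₀ - 1 - t) (by omega)
      rw [show t + (s₀ - 1 - t) = s₀ - 1 by omega] at hplat
      -- growth step at s₀
      have hgrow : β * ∑ i ∈ insert u₀ S, lam s₀ i ≤ ∑ i ∈ S, lam (s₀ - 1) i := by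
        have hs₀eq : s₀ - 1 + 1 = s₀ := by omega
        have hstep : ∑ j ∈ S, lam (s₀ - 1) j
            = ∑ i, lam s₀ i * ∑ j ∈ S, C s₀ i j := by
          calc ∑ j ∈ S, lam (s₀ - 1) j
              = ∑ j ∈ S, ∑ i, lam (s₀ - 1 + 1) i * C (s₀ - 1 + 1) i j := by
                apply Finset.sum_congr rfl
                intro j _
                exact hrec (s₀ - 1) j
          _ = ∑ i, lam s₀ i * ∑ j ∈ S, C s₀ i j := by
                rw [Finset.sum_comm]
                apply Finset.sum_congr rfl
                intro i _
                rw [Finset.mul_sum, hs₀eq]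
        rw [hstep]
        have hs₀pos : 1 ≤ s₀ := by omega
        have hnn' := (hst s₀ hs₀pos).1
        calc β * ∑ i ∈ insert u₀ S, lam s₀ i = ∑ i ∈ insert u₀ S, lam s₀ i * β := by
              rw [Finset.mul_sum]
              apply Finset.sum_congr rfl
              intro i _
              ring
        _ ≤ ∑ i ∈ insert u₀ S, lam s₀ i * ∑ j ∈ S, C s₀ i j := by
              apply Finset.sum_le_sum
              intro i hi
              apply mul_le_mul_of_nonneg_left _ (hnn s₀ i)
              rcases Finset.mem_insert.mp hi with rfl | hiS
              · calc β ≤ C s₀ i j₀ := hlbC s₀ hs₀pos i j₀ hpos₀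
                _ ≤ ∑ j ∈ S, C s₀ i j :=
                    Finset.single_le_sum (fun j _ => hnn' i j) hj₀
              · calc β ≤ C s₀ i i := hlbC s₀ hs₀pos i i (hdg s₀ hs₀pos i)
                _ ≤ ∑ j ∈ S, C s₀ i j :=
                    Finset.single_le_sum (fun j _ => hnn' i j) hiS
        _ ≤ ∑ i, lam s₀ i * ∑ j ∈ S, C s₀ i j := by
              apply Finset.sum_le_sum_of_subset_of_nonneg (Finset.subset_univ _)
              intro i _ _
              exact mul_nonneg (hnn s₀ i) (Finset.sum_nonneg fun j _ => hnn' i j)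
      -- induction hypothesis on the larger set
      have hih := ih s₀ (insert u₀ S) (Finset.insert_nonempty u₀ S) (by
        rw [Finset.card_insert_of_notMem hu₀]
        omega)
      calc β ^ (k + 1) = β * β ^ k := by ring
      _ ≤ β * ∑ i ∈ insert u₀ S, lam s₀ i :=
          mul_le_mul_of_nonneg_left hih (le_of_lt hβ)
      _ ≤ ∑ i ∈ S, lam (s₀ - 1) i := hgrow
      _ = ∑ i ∈ S, lam t i := by rw [← hplat]
      _ ≤ ∑ i ∈ S, lam t i := le_rfl

end PhaseB2

lemma abs_le_of_sq_le_sq'' {d e : ℝ} (h : d ^ 2 ≤ e ^ 2) (he : 0 ≤ e) : |d| ≤ e := by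
  by_contra h'
  push_neg at h'
  have h2 := mul_self_lt_mul_self he h'
  rw [← sq, ← sq, sq_abs] at h2
  linarith

section PhaseB3

variable {C : ℕ → Matrix (Fin n) (Fin n) ℝ} {β : ℝ}

lemma mulVec_apply' (M : Matrix (Fin n) (Fin n) ℝ) (v : Fin n → ℝ) (i : Fin n) :
    M.mulVec v i = ∑ j, M i j * v j := by
  simp [Matrix.mulVec, dotProduct]

/-- the quadratic Lyapunov identity -/
lemma lyapunov_identity (hst : ∀ t, 1 ≤ t → Stochastic (C t))
    {lam : ℕ → Fin n → ℝ}
    (hrec : ∀ t j, lam t j = ∑ i, lam (t + 1) i * C (t + 1) i j)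
    {x : ℕ → Fin n → ℝ} (hx : ∀ t, x (t + 1) = (C (t + 1)).mulVec (x t)) (t : ℕ) :
    (∑ i, lam t i * (x t i) ^ 2) - (∑ i, lam (t + 1) i * (x (t + 1) i) ^ 2)
      = ∑ i, lam (t + 1) i * ∑ j, C (t + 1) i j * (x t j - x (t + 1) i) ^ 2 := by
  have hxr : ∀ i, x (t + 1) i = ∑ j, C (t + 1) i j * x t j := by
    intro i
    rw [hx t]
    exact mulVec_apply' _ _ i
  have key : ∀ i, ∑ j, C (t + 1) i j * (x t j - x (t + 1) i) ^ 2
      = (∑ j, C (t + 1) i j * (x t j) ^ 2) - (x (t + 1) i) ^ 2 := by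
    intro i
    have hrow := (hst (t + 1) (by omega)).2 i
    have hexp : ∀ j ∈ Finset.univ, C (t + 1) i j * (x t j - x (t + 1) i) ^ 2
        = C (t + 1) i j * (x t j) ^ 2
          - 2 * x (t + 1) i * (C (t + 1) i j * x t j)
          + (x (t + 1) i) ^ 2 * C (t + 1) i j := by
      intro j _
      ring
    rw [Finset.sum_congr rfl hexp, Finset.sum_add_distrib, Finset.sum_sub_distrib,
      ← Finset.mul_sum, ← Finset.mul_sum, ← hxr i, hrow]
    ring
  have h1 : ∑ j, lam t j * (x t j) ^ 2
      = ∑ i, lam (t + 1) i * ∑ j, C (t + 1) i j * (x t j) ^ 2 := by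
    calc ∑ j, lam t j * (x t j) ^ 2
        = ∑ j, ∑ i, lam (t + 1) i * C (t + 1) i j * (x t j) ^ 2 := by
          apply Finset.sum_congr rfl
          intro j _
          rw [hrec t j, Finset.sum_mul]
    _ = ∑ i, ∑ j, lam (t + 1) i * C (t + 1) i j * (x t j) ^ 2 := Finset.sum_comm
    _ = ∑ i, lam (t + 1) i * ∑ j, C (t + 1) i j * (x t j) ^ 2 := by
          apply Finset.sum_congr rfl
          intro i _
          rw [Finset.mul_sum]
          apply Finset.sum_congr rfl
          intro j _
          ring
  calc (∑ i, lam t i * (x t i) ^ 2) - (∑ i, lam (t + 1) i * (x (t + 1) i) ^ 2)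
      = (∑ i, lam (t + 1) i * ∑ j, C (t + 1) i j * (x t j) ^ 2)
        - ∑ i, lam (t + 1) i * (x (t + 1) i) ^ 2 := by rw [h1]
  _ = ∑ i, (lam (t + 1) i * ∑ j, C (t + 1) i j * (x t j) ^ 2
        - lam (t + 1) i * (x (t + 1) i) ^ 2) := by rw [Finset.sum_sub_distrib]
  _ = ∑ i, lam (t + 1) i * ∑ j, C (t + 1) i j * (x t j - x (t + 1) i) ^ 2 := by
        apply Finset.sum_congr rfl
        intro i _
        rw [key i]
        ring

set_option maxHeartbeats 1000000 in
/-- eventually, every positive entry of the chain links `ε`-close values -/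
lemma edge_close (hst : ∀ t, 1 ≤ t → Stochastic (C t)) (hβ : 0 < β)
    (hlbC : ∀ t, 1 ≤ t → ∀ i j, 0 < C t i j → β ≤ C t i j)
    {lam : ℕ → Fin n → ℝ} (hnn : ∀ t i, 0 ≤ lam t i)
    (hrec : ∀ t j, lam t j = ∑ i, lam (t + 1) i * C (t + 1) i j)
    (hlampos : ∀ t i, β ^ (n - 1) ≤ lam t i)
    {x : ℕ → Fin n → ℝ} (hx : ∀ t, x (t + 1) = (C (t + 1)).mulVec (x t))
    {ε : ℝ} (hε : 0 < ε) :
    ∃ L, ∀ t, L ≤ t → ∀ i j, 0 < C (t + 1) i j → |x t j - x (t + 1) i| ≤ ε := by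
  classical
  set V : ℕ → ℝ := fun t => ∑ i, lam t i * (x t i) ^ 2 with hV
  have hdec : ∀ t, V t - V (t + 1)
      = ∑ i, lam (t + 1) i * ∑ j, C (t + 1) i j * (x t j - x (t + 1) i) ^ 2 :=
    fun t => lyapunov_identity hst hrec hx t
  have hdecnn : ∀ t, 0 ≤ V t - V (t + 1) := by
    intro t
    rw [hdec t]
    apply Finset.sum_nonneg
    intro i _
    exact mul_nonneg (hnn _ i) (Finset.sum_nonneg fun j _ =>
      mul_nonneg ((hst _ (by omega)).1 i j) (sq_nonneg _))
  have hmono : Antitone V := antitone_nat_of_succ_le fun t => by linarith [hdecnn t]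
  have hbdd : BddBelow (Set.range V) := by
    refine ⟨0, ?_⟩
    rintro y ⟨t, rfl⟩
    exact Finset.sum_nonneg fun i _ => mul_nonneg (hnn t i) (sq_nonneg _)
  have hconv : Tendsto V atTop (nhds (⨅ t, V t)) := tendsto_atTop_ciInf hmono hbdd
  have hconv' : Tendsto (fun t => V (t + 1)) atTop (nhds (⨅ t, V t)) :=
    hconv.comp (tendsto_add_atTop_nat 1)
  have hdiff : Tendsto (fun t => V t - V (t + 1)) atTop (nhds 0) := by
    have := hconv.sub hconv'
    simpa using this
  have hev : ∀ᶠ t in atTop, V t - V (t + 1) < β ^ (n - 1) * β * ε ^ 2 := by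
    have hpos : 0 < β ^ (n - 1) * β * ε ^ 2 := by positivity
    exact hdiff.eventually (eventually_lt_nhds hpos)
  obtain ⟨L, hL⟩ := Filter.eventually_atTop.mp hev
  refine ⟨L, fun t ht i j hij => ?_⟩
  have h1 : lam (t + 1) i * (C (t + 1) i j * (x t j - x (t + 1) i) ^ 2) ≤ V t - V (t + 1) := by
    rw [hdec t]
    have hinner : C (t + 1) i j * (x t j - x (t + 1) i) ^ 2
        ≤ ∑ j', C (t + 1) i j' * (x t j' - x (t + 1) i) ^ 2 :=
      Finset.single_le_sum (f := fun j' => C (t + 1) i j' * (x t j' - x (t + 1) i) ^ 2)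
        (fun j' _ => mul_nonneg ((hst _ (by omega)).1 i j') (sq_nonneg _))
        (Finset.mem_univ j)
    calc lam (t + 1) i * (C (t + 1) i j * (x t j - x (t + 1) i) ^ 2)
        ≤ lam (t + 1) i * ∑ j', C (t + 1) i j' * (x t j' - x (t + 1) i) ^ 2 :=
          mul_le_mul_of_nonneg_left hinner (hnn _ i)
    _ ≤ ∑ i', lam (t + 1) i' * ∑ j', C (t + 1) i' j' * (x t j' - x (t + 1) i') ^ 2 :=
          Finset.single_le_sum
            (f := fun i' => lam (t + 1) i' * ∑ j', C (t + 1) i' j' * (x t j' - x (t + 1) i') ^ 2)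
            (fun i' _ => mul_nonneg (hnn _ i') (Finset.sum_nonneg
            fun j' _ => mul_nonneg ((hst _ (by omega)).1 i' j') (sq_nonneg _)))
            (Finset.mem_univ i)
  have h2 : β ^ (n - 1) * β * (x t j - x (t + 1) i) ^ 2
      ≤ lam (t + 1) i * (C (t + 1) i j * (x t j - x (t + 1) i) ^ 2) := by
    have hb1 : β ≤ C (t + 1) i j := hlbC _ (by omega) i j hij
    have hb2 : β ^ (n - 1) ≤ lam (t + 1) i := hlampos _ i
    have hsq : (0:ℝ) ≤ (x t j - x (t + 1) i) ^ 2 := sq_nonneg _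
    have := mul_le_mul hb2 (mul_le_mul_of_nonneg_right hb1 hsq)
      (by positivity) (le_trans (by positivity) hb2)
    calc β ^ (n - 1) * β * (x t j - x (t + 1) i) ^ 2
        = β ^ (n - 1) * (β * (x t j - x (t + 1) i) ^ 2) := by ring
    _ ≤ lam (t + 1) i * (C (t + 1) i j * (x t j - x (t + 1) i) ^ 2) := this
  have h3 := hL t ht
  have h4 : (x t j - x (t + 1) i) ^ 2 ≤ ε ^ 2 := by
    have hfac : (0:ℝ) < β ^ (n - 1) * β := by positivity
    nlinarith
  exact abs_le_of_sq_le_sq'' h4 (le_of_lt hε)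

end PhaseB3

section PhaseB4

variable {C : ℕ → Matrix (Fin n) (Fin n) ℝ} {β : ℝ}

set_option maxHeartbeats 1000000 in
/-- every column of the backward products reaches consensus -/
lemma column_consensus (hn : 0 < n) (hst : ∀ t, 1 ≤ t → Stochastic (C t))
    (hdg : ∀ t, 1 ≤ t → ∀ i, 0 < C t i i)
    (hwin : ∀ l, ∃ M, l ≤ M ∧ ∀ M', M ≤ M' → ∀ i j, 0 < backProd C l (M' - l) i j)
    {x : ℕ → Fin n → ℝ} (hx : ∀ t, x (t + 1) = (C (t + 1)).mulVec (x t))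
    (hedge : ∀ ε : ℝ, 0 < ε → ∃ L, ∀ t, L ≤ t → ∀ i j, 0 < C (t + 1) i j →
      |x t j - x (t + 1) i| ≤ ε) :
    ∃ c : ℝ, ∀ i, Tendsto (fun t => x t i) atTop (nhds c) := by
  classical
  haveI : Nonempty (Fin n) := ⟨⟨0, hn⟩⟩
  have hne : (Finset.univ : Finset (Fin n)).Nonempty := Finset.univ_nonempty
  set F : ℕ → ℝ := fun t => Finset.univ.inf' hne (x t) with hF
  set G : ℕ → ℝ := fun t => Finset.univ.sup' hne (x t) with hG
  have hFle : ∀ t i, F t ≤ x t i := fun t i => Finset.inf'_le _ (Finset.mem_univ i)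
  have hGle : ∀ t i, x t i ≤ G t := fun t i => Finset.le_sup' _ (Finset.mem_univ i)
  have hxr : ∀ t i, x (t + 1) i = ∑ j, C (t + 1) i j * x t j := by
    intro t i
    rw [hx t]
    exact mulVec_apply' _ _ i
  have hFmono : Monotone F := by
    apply monotone_nat_of_le_succ
    intro t
    apply Finset.le_inf'
    intro i _
    rw [hxr t i]
    calc F t = ∑ j, C (t + 1) i j * F t := by
          rw [← Finset.sum_mul, (hst (t+1) (by omega)).2 i, one_mul]
    _ ≤ ∑ j, C (t + 1) i j * x t j :=
          Finset.sum_le_sum fun j _ => mul_le_mul_of_nonneg_left (hFle t j)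
            ((hst (t+1) (by omega)).1 i j)
  have hGanti : Antitone G := by
    apply antitone_nat_of_succ_le
    intro t
    apply Finset.sup'_le
    intro i _
    rw [hxr t i]
    calc ∑ j, C (t + 1) i j * x t j ≤ ∑ j, C (t + 1) i j * G t :=
          Finset.sum_le_sum fun j _ => mul_le_mul_of_nonneg_left (hGle t j)
            ((hst (t+1) (by omega)).1 i j)
    _ = G t := by rw [← Finset.sum_mul, (hst (t+1) (by omega)).2 i, one_mul]
  have hFG : ∀ t, F t ≤ G t := fun t =>
    le_trans (hFle t (Classical.arbitrary _)) (hGle t _)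
  have hFbdd : BddAbove (Set.range F) := by
    refine ⟨G 0, ?_⟩
    rintro y ⟨t, rfl⟩
    exact le_trans (hFG t) (hGanti (Nat.zero_le t))
  have hGbdd : BddBelow (Set.range G) := by
    refine ⟨F 0, ?_⟩
    rintro y ⟨t, rfl⟩
    exact le_trans (hFmono (Nat.zero_le t)) (hFG t)
  set mstar := ⨆ t, F t with hmstar
  set Mstar := ⨅ t, G t with hMstar
  have hFlim : Tendsto F atTop (nhds mstar) := tendsto_atTop_ciSup hFmono hFbdd
  have hGlim : Tendsto G atTop (nhds Mstar) := tendsto_atTop_ciInf hGanti hGbdd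
  have hmM : mstar ≤ Mstar := le_of_tendsto_of_tendsto' hFlim hGlim hFG
  have hFlemstar : ∀ t, F t ≤ mstar := fun t => le_ciSup hFbdd t
  have hMstarleG : ∀ t, Mstar ≤ G t := fun t => ciInf_le hGbdd t
  -- main claim : Mstar = mstar
  have hMm : Mstar = mstar := by
    by_contra hMne
    have hglt : 0 < Mstar - mstar := by
      rcases lt_or_eq_of_le hmM with h | h
      · linarith
      · exact absurd h.symm hMne
    set g := Mstar - mstar with hg
    have hnR : (0:ℝ) < (n:ℝ) := by exact_mod_cast hn
    set θ := g / n with hθ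
    have hθpos : 0 < θ := by positivity
    set ε := θ / 4 with hε
    have hεpos : 0 < ε := by positivity
    obtain ⟨L, hL⟩ := hedge ε hεpos
    set t₀ := L with ht₀
    -- spread at t₀ is at least g
    have hspread : F t₀ + g ≤ G t₀ := by
      have h1 := hFlemstar t₀
      have h2 := hMstarleG t₀
      rw [hg]; linarith
    -- bucket pigeonhole to find a gap of width θ
    set N : ℕ → Finset (Fin n) :=
      fun k => Finset.univ.filter (fun i => x t₀ i ≤ F t₀ + k * θ) with hN
    have hNsub : ∀ k, N k ⊆ N (k + 1) := by
      intro k i hi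
      rw [hN, Finset.mem_filter] at hi ⊢
      refine ⟨hi.1, le_trans hi.2 ?_⟩
      have : (k:ℝ) ≤ (k:ℝ) + 1 := by linarith
      push_cast
      nlinarith [le_of_lt hθpos]
    have hN0 : 1 ≤ (N 0).card := by
      obtain ⟨i₀, _, hi₀⟩ := Finset.exists_mem_eq_inf' hne (x t₀)
      have hmem : i₀ ∈ N 0 := by
        rw [hN, Finset.mem_filter]
        refine ⟨Finset.mem_univ _, ?_⟩
        have hFi : F t₀ = x t₀ i₀ := hi₀
        push_cast
        linarith [le_of_lt hθpos]
      exact Finset.card_pos.mpr ⟨i₀, hmem⟩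
    have hkey : ∃ k, k < n ∧ N k = N (k + 1) := by
      by_contra hc
      push_neg at hc
      have hcard : ∀ k, k ≤ n → k + 1 ≤ (N k).card := by
        intro k
        induction k with
        | zero => intro _; simpa using hN0
        | succ k ihk =>
          intro hk
          have h1 := ihk (by omega)
          have h2 : N k ⊂ N (k + 1) :=
            Finset.ssubset_iff_subset_ne.mpr ⟨hNsub k, hc k (by omega)⟩
          have h3 := Finset.card_lt_card h2
          omega
      have := hcard n le_rfl
      have hle := Finset.card_le_univ (N n)
      simp only [Finset.card_univ, Fintype.card_fin] at hle
      omega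
    obtain ⟨k₀, hk₀n, hk₀⟩ := hkey
    set c := F t₀ + k₀ * θ with hc
    -- no value lies in (c, c + θ]
    have hgap : ∀ i, ¬ (c < x t₀ i ∧ x t₀ i ≤ c + θ) := by
      rintro i ⟨h1, h2⟩
      have hiN : i ∈ N (k₀ + 1) := by
        rw [hN, Finset.mem_filter]
        refine ⟨Finset.mem_univ _, ?_⟩
        rw [hc] at h2
        push_cast
        linarith
      rw [← hk₀, hN, Finset.mem_filter] at hiN
      rw [hc] at h1
      linarith [hiN.2]
    -- lows exist
    have hlow : ∃ i, x t₀ i ≤ c := by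
      obtain ⟨i₀, _, hi₀⟩ := Finset.exists_mem_eq_inf' hne (x t₀)
      refine ⟨i₀, ?_⟩
      rw [hc, ← hi₀]
      have : (0:ℝ) ≤ k₀ * θ := by positivity
      have hFF : Finset.univ.inf' hne (x t₀) = F t₀ := by rw [hF]
      rw [hFF]
      linarith
    -- highs exist
    have hhigh : ∃ i, c + θ < x t₀ i := by
      obtain ⟨i₁, _, hi₁⟩ := Finset.exists_mem_eq_sup' hne (x t₀)
      refine ⟨i₁, ?_⟩
      have hx1 : x t₀ i₁ = G t₀ := hi₁.symm
      have hck : c + θ ≤ F t₀ + g := by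
        rw [hc]
        have h2 : ((k₀:ℝ) + 1) ≤ (n:ℝ) := by exact_mod_cast hk₀n
        have h3 : ((k₀:ℝ) + 1) * θ ≤ (n:ℝ) * θ :=
          mul_le_mul_of_nonneg_right h2 (le_of_lt hθpos)
        have h4 : (n:ℝ) * θ = g := by
          rw [hθ]; field_simp
        nlinarith
      rcases lt_or_ge (c + θ) (x t₀ i₁) with h | h
      · exact h
      · exfalso
        have h5 : c + θ ≤ G t₀ := le_trans hck hspread
        have h6 : x t₀ i₁ = c + θ := by rw [hx1]; linarith
        exact hgap i₁ ⟨by rw [h6]; linarith, by rw [h6]⟩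
    set Phigh : Fin n → Prop := fun i => c + θ < x t₀ i with hPhigh
    -- the invariant
    have hInv : ∀ t, t₀ ≤ t →
        (∀ i, Phigh i → c + θ < x t i) ∧ (∀ i, ¬ Phigh i → x t i ≤ c) := by
      intro t ht
      induction t, ht using Nat.le_induction with
      | base =>
        constructor
        · intro i hi; exact hi
        · intro i hi
          have hi' : x t₀ i ≤ c + θ := not_lt.mp (fun hlt => hi hlt)
          rcases lt_or_ge c (x t₀ i) with h | h
          · exact absurd ⟨h, hi'⟩ (hgap i)
          · exact h
      | succ t ht iht =>
        have hcl : ∀ i, Phigh i → ∀ j, 0 < C (t + 1) i j → Phigh j := by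
          intro i hi j hij
          have h1 : |x t j - x (t + 1) i| ≤ ε := hL t ht i j hij
          have h2 : |x t i - x (t + 1) i| ≤ ε := hL t ht i i (hdg (t+1) (by omega) i)
          have h3 : c + θ < x t i := iht.1 i hi
          have h4 : x t i - 2 * ε ≤ x t j := by
            rw [abs_le] at h1 h2
            linarith [h1.1, h1.2, h2.1, h2.2]
          have h5 : c < x t j := by
            have hee : ε = θ / 4 := hε
            nlinarith [hθpos]
          by_contra hPj
          have := iht.2 j hPj
          linarith
        constructor
        · intro i hi
          rw [hxr t i]
          have hrow := (hst (t+1) (by omega)).2 i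
          have hnn := (hst (t+1) (by omega)).1
          have hsplit : ∑ j, C (t + 1) i j * x t j - (c + θ)
              = ∑ j, C (t + 1) i j * (x t j - (c + θ)) := by
            rw [Finset.sum_congr rfl (fun j _ => by ring :
              ∀ j ∈ Finset.univ, C (t + 1) i j * (x t j - (c + θ))
                = C (t + 1) i j * x t j - C (t+1) i j * (c + θ)),
              Finset.sum_sub_distrib, ← Finset.sum_mul, hrow]
            ring
          have hpos : 0 < ∑ j, C (t + 1) i j * (x t j - (c + θ)) := by
            apply Finset.sum_pos'
            · intro j _
              rcases lt_or_ge 0 (C (t + 1) i j) with hj | hj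
              · have := iht.1 j (hcl i hi j hj)
                have := hcl i hi j hj
                have h6 : c + θ < x t j := iht.1 j this
                apply mul_nonneg (le_of_lt hj)
                linarith
              · have h0 : C (t + 1) i j = 0 := le_antisymm hj (hnn i j)
                rw [h0, zero_mul]
            · refine ⟨i, Finset.mem_univ i, ?_⟩
              have h7 := hdg (t+1) (by omega) i
              have h8 := iht.1 i hi
              apply mul_pos h7
              linarith
          linarith [hsplit ▸ hpos]
        · intro i hi
          rw [hxr t i]
          have hrow := (hst (t+1) (by omega)).2 i
          have hnn := (hst (t+1) (by omega)).1
          have hcl2 : ∀ j, 0 < C (t + 1) i j → x t j ≤ c := by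
            intro j hij
            have h1 : |x t j - x (t + 1) i| ≤ ε := hL t ht i j hij
            have h2 : |x t i - x (t + 1) i| ≤ ε := hL t ht i i (hdg (t+1) (by omega) i)
            have h3 : x t i ≤ c := iht.2 i hi
            have h4 : x t j ≤ x t i + 2 * ε := by
              rw [abs_le] at h1 h2
              linarith [h1.1, h1.2, h2.1, h2.2]
            by_cases hPj : Phigh j
            · exfalso
              have h5 := iht.1 j hPj
              rw [hε] at h4
              linarith
            · exact iht.2 j hPj
          calc ∑ j, C (t + 1) i j * x t j ≤ ∑ j, C (t + 1) i j * c := by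
                apply Finset.sum_le_sum
                intro j _
                rcases lt_or_ge 0 (C (t + 1) i j) with hj | hj
                · exact mul_le_mul_of_nonneg_left (hcl2 j hj) (le_of_lt hj)
                · have h0 : C (t + 1) i j = 0 := le_antisymm hj (hnn i j)
                  rw [h0, zero_mul, zero_mul]
          _ = c := by rw [← Finset.sum_mul, hrow, one_mul]
    -- the high set never listens to the low set after t₀ : zero block, contradiction
    set S : Finset (Fin n) := Finset.univ.filter (fun i => ¬ Phigh i) with hS
    have hcl : ∀ s, t₀ < s → ∀ u j, u ∉ S → j ∈ S → ¬ 0 < C s u j := by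
      intro s hs u j hu hj hpos
      have hs1 : s - 1 + 1 = s := by omega
      have hu' : Phigh u := by
        rw [hS, Finset.mem_filter] at hu
        push_neg at hu
        exact hu (Finset.mem_univ u)
      have hj' : ¬ Phigh j := by
        rw [hS] at hj
        exact (Finset.mem_filter.mp hj).2
      have hinv := hInv (s - 1) (by omega)
      -- redo the "high listens only to high" step at time s-1
      have h1 : |x (s-1) j - x (s-1+1) u| ≤ ε := by
        apply hL (s-1) (by omega)
        rwa [hs1]
      have h2 : |x (s-1) u - x (s-1+1) u| ≤ ε := by
        apply hL (s-1) (by omega)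
        rw [hs1]
        exact hdg s (by omega) u
      have h3 : c + θ < x (s-1) u := hinv.1 u hu'
      have h4 : x (s-1) u - 2 * ε ≤ x (s-1) j := by
        rw [abs_le] at h1 h2
        linarith [h1.1, h1.2, h2.1, h2.2]
      have h5 : x (s-1) j ≤ c := hinv.2 j hj'
      rw [hε] at h4
      linarith
    obtain ⟨u₁, hu₁⟩ := hhigh
    obtain ⟨j₁, hj₁⟩ := hlow
    have hu₁S : u₁ ∉ S := by
      simp only [hS, Finset.mem_filter, Finset.mem_univ, true_and, not_not]
      exact hu₁
    have hj₁S : j₁ ∈ S := by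
      simp only [hS, Finset.mem_filter, Finset.mem_univ, true_and]
      intro hP
      have hP' : c + θ < x t₀ j₁ := hP
      linarith
    obtain ⟨M, hM1, hM2⟩ := hwin t₀
    have hposM := hM2 M le_rfl u₁ j₁
    rw [closed_zero_block hst hcl (M - t₀) u₁ j₁ hu₁S hj₁S] at hposM
    exact lt_irrefl _ hposM
  -- conclude : all coordinates converge to mstar
  refine ⟨mstar, fun i => ?_⟩
  have hGlim' : Tendsto G atTop (nhds mstar) := by rwa [hMm] at hGlim
  exact tendsto_of_tendsto_of_tendsto_of_le_of_le hFlim hGlim'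
    (fun t => hFle t i) (fun t => hGle t i)

end PhaseB4

set_option maxHeartbeats 1000000 in
/-- consensus theorem for self-confident completely reducible chains -/
theorem phaseB {C : ℕ → Matrix (Fin n) (Fin n) ℝ} {β : ℝ} (hn : 0 < n) (hβ : 0 < β)
    (hst : ∀ t, 1 ≤ t → Stochastic (C t))
    (hlbC : ∀ t, 1 ≤ t → ∀ i j, 0 < C t i j → β ≤ C t i j)
    (hdg : ∀ t, 1 ≤ t → ∀ i, 0 < C t i i)
    (hcrC : ∀ t, 1 ≤ t → CompRed (C t))
    (hwin : ∀ l, ∃ M, l ≤ M ∧ ∀ M', M ≤ M' → ∀ i j, 0 < backProd C l (M' - l) i j) :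
    ∃ L : Matrix (Fin n) (Fin n) ℝ, Stochastic L ∧ (∀ i i' j, L i j = L i' j) ∧
      ∀ i j, Tendsto (fun k => backProd C 0 k i j) atTop (nhds (L i j)) := by
  classical
  haveI : Nonempty (Fin n) := ⟨⟨0, hn⟩⟩
  have hβ1 : β ≤ 1 := by
    have h1 := hdg 1 le_rfl ⟨0, hn⟩
    calc β ≤ C 1 ⟨0, hn⟩ ⟨0, hn⟩ := hlbC 1 le_rfl _ _ h1
    _ ≤ 1 := entry_le_one (hst 1 le_rfl) _ _
  obtain ⟨lam, hlnn, hlsum, hlrec⟩ := exists_aps hn hst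
  have hlampos : ∀ t i, β ^ (n - 1) ≤ lam t i := by
    intro t i
    have h := lam_mass_ge hn hst hβ hβ1 hlbC hdg hcrC hwin hlnn hlsum hlrec
      (n - 1) t {i} (Finset.singleton_nonempty i) (by
        rw [Finset.card_singleton]; omega)
    simpa using h
  -- column dynamics
  have hcol : ∀ j : Fin n, ∃ c : ℝ,
      ∀ i, Tendsto (fun t => backProd C 0 t i j) atTop (nhds c) := by
    intro j
    set x : ℕ → Fin n → ℝ := fun t i => backProd C 0 t i j with hxdef
    have hx : ∀ t, x (t + 1) = (C (t + 1)).mulVec (x t) := by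
      intro t
      funext i
      simp only [hxdef]
      rw [backProd_succ, show (0:ℕ) + t + 1 = t + 1 by omega, Matrix.mul_apply,
        mulVec_apply']
    have hedge : ∀ ε : ℝ, 0 < ε → ∃ L, ∀ t, L ≤ t → ∀ i j', 0 < C (t + 1) i j' →
        |x t j' - x (t + 1) i| ≤ ε := by
      intro ε hε
      exact edge_close hst hβ hlbC hlnn hlrec hlampos hx hε
    exact column_consensus hn hst hdg hwin hx hedge
  choose cf hcf using hcol
  refine ⟨Matrix.of (fun _ j => cf j), ⟨?_, ?_⟩, fun i i' j => rfl, fun i j => hcf j i⟩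
  · intro i j
    show 0 ≤ cf j
    exact ge_of_tendsto' (hcf j i) (fun t => backProd_nonneg hst 0 t i j)
  · intro i
    show ∑ j, cf j = 1
    have h1 : Tendsto (fun t => ∑ j, backProd C 0 t i j) atTop (nhds (∑ j, cf j)) :=
      tendsto_finset_sum _ (fun j _ => hcf j i)
    have h2 : (fun t => ∑ j, backProd C 0 t i j) = fun _ => (1:ℝ) := by
      funext t
      exact (backProd_stochastic hst 0 t).2 i
    rw [h2] at h1
    exact tendsto_nhds_unique (by exact tendsto_const_nhds) h1 |>.symm

end Work

theorem stmt16 {n : ℕ} (A : ℕ → Matrix (Fin n) (Fin n) ℝ)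
    (H : Fin n → Fin n → Prop) (α : ℝ) (hα : 0 < α)
    (hstoch : ∀ k, 1 ≤ k → Stochastic (A k))
    (hlb : ∀ k, 1 ≤ k → ∀ i j, 0 < A k i j → α ≤ A k i j)
    (hep : ∀ k, 1 ≤ k → ∃ K, k ≤ K ∧
      ∀ i j, 0 < (∑ k' ∈ Finset.Icc k K, backProd A (k - 1) (k' + 1 - k)) i j)
    (hcr : ∀ k, 1 ≤ k → CompRed (A k))
    (hsub : ∀ k, 1 ≤ k → ∀ i j, H i j → 0 < A k i j)
    (hns : ∀ i : Fin n, ∃ j, H i j)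
    (hap : ∀ i : Fin n, AperiodicAt H i) :
    ∃ L : Matrix (Fin n) (Fin n) ℝ, Stochastic L ∧ (∀ i i' j, L i j = L i' j) ∧
      ∀ i j, Tendsto (fun k => backProd A 0 k i j) atTop (nhds (L i j)) := by
  classical
  rcases Nat.eq_zero_or_pos n with hn0 | hn
  · subst hn0
    exact ⟨1, ⟨fun i => i.elim0, fun i => i.elim0⟩, fun i => i.elim0, fun i => i.elim0⟩
  obtain ⟨T, hT1, hT⟩ := Work.exists_T0 hap
  have hαT : (0:ℝ) < α ^ T := pow_pos hα T
  have hsub' : ∀ k, 1 ≤ k → ∀ i j, H i j → α ≤ A k i j :=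
    fun k hk i j hij => hlb k hk i j (hsub k hk i j hij)
  have hstW : ∀ t, 1 ≤ t → Stochastic (Work.WC A T t) :=
    fun t _ => Work.wc_stochastic hstoch t
  have hlbW : ∀ t, 1 ≤ t → ∀ i j, 0 < Work.WC A T t i j → α ^ T ≤ Work.WC A T t i j :=
    fun t _ i j h => Work.wc_lb hstoch hα hlb t i j h
  have hdgW : ∀ t, 1 ≤ t → ∀ i, 0 < Work.WC A T t i i :=
    fun t _ i => Work.wc_diag hstoch hα hsub' hT t i
  have hcrW : ∀ t, 1 ≤ t → CompRed (Work.WC A T t) :=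
    fun t ht => Work.wc_compred hstoch hα hlb hsub' hcr hT ht
  have hwinW : ∀ l, ∃ M, l ≤ M ∧ ∀ M', M ≤ M' → ∀ i j,
      0 < backProd (Work.WC A T) l (M' - l) i j :=
    fun l => Work.wc_win hstoch hα hsub' hep hT1 hT l
  obtain ⟨L, hL1, hL2, hL3⟩ := Work.phaseB hn hαT hstW hlbW hdgW hcrW hwinW
  refine ⟨L, hL1, hL2, ?_⟩
  intro i j
  rw [Metric.tendsto_atTop]
  intro ε hε
  have hε2 : 0 < ε / 2 := by linarith
  -- convergence of the T-subsequence, uniformly over rows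
  have hcol : ∀ c : Fin n, ∃ N, ∀ m, N ≤ m →
      |backProd A 0 (T * m) c j - L i j| ≤ ε / 2 := by
    intro c
    have h1 := hL3 c j
    rw [Metric.tendsto_atTop] at h1
    obtain ⟨N, hN⟩ := h1 (ε / 2) hε2
    refine ⟨N, fun m hm => ?_⟩
    have h2 := hN m hm
    rw [Real.dist_eq] at h2
    have heq : backProd (Work.WC A T) 0 m = backProd A 0 (T * m) := by
      rw [Work.wc_backProd, Nat.mul_zero]
    rw [heq] at h2
    rw [hL2 c i j] at h2
    exact le_of_lt h2
  choose Nf hNf using hcol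
  set N₀ := Finset.univ.sup Nf with hN₀
  refine ⟨T * N₀ + T, fun k hk => ?_⟩
  rw [Real.dist_eq]
  set m := k / T with hm
  set s := k % T with hs
  have hks : k = T * m + s := by
    rw [hm, hs]
    exact (Nat.div_add_mod k T).symm
  have hmN : N₀ + 1 ≤ m := by
    rw [hm]
    rw [Nat.le_div_iff_mul_le (by omega : 0 < T)]
    calc (N₀ + 1) * T = T * N₀ + T := by ring
    _ ≤ k := hk
  have hdecomp : backProd A 0 k = backProd A (T * m) s * backProd A 0 (T * m) := by
    rw [hks]
    have := Work.backProd_add A 0 (T * m) s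
    rwa [Nat.zero_add] at this
  rw [hdecomp]
  have hRst : Stochastic (backProd A (T * m) s) := Work.backProd_stochastic hstoch _ _
  have hQb : ∀ c, |backProd A 0 (T * m) c j - L i j| ≤ ε / 2 := by
    intro c
    apply hNf c m
    calc Nf c ≤ N₀ := Finset.le_sup (Finset.mem_univ c)
    _ ≤ m := by omega
  have hkey : (backProd A (T * m) s * backProd A 0 (T * m)) i j - L i j
      = ∑ c, backProd A (T * m) s i c * (backProd A 0 (T * m) c j - L i j) := by
    rw [Matrix.mul_apply]
    rw [Finset.sum_congr rfl (fun c _ => by ring :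
      ∀ c ∈ Finset.univ, backProd A (T * m) s i c * (backProd A 0 (T * m) c j - L i j)
        = backProd A (T * m) s i c * backProd A 0 (T * m) c j
          - backProd A (T * m) s i c * L i j),
      Finset.sum_sub_distrib, ← Finset.sum_mul, hRst.2 i, one_mul]
  rw [hkey]
  calc |∑ c, backProd A (T * m) s i c * (backProd A 0 (T * m) c j - L i j)|
      ≤ ∑ c, |backProd A (T * m) s i c * (backProd A 0 (T * m) c j - L i j)| :=
        Finset.abs_sum_le_sum_abs _ _
  _ = ∑ c, backProd A (T * m) s i c * |backProd A 0 (T * m) c j - L i j| := by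
        apply Finset.sum_congr rfl
        intro c _
        rw [abs_mul, abs_of_nonneg (hRst.1 i c)]
  _ ≤ ∑ c, backProd A (T * m) s i c * (ε / 2) :=
        Finset.sum_le_sum fun c _ => mul_le_mul_of_nonneg_left (hQb c) (hRst.1 i c)
  _ = ε / 2 := by rw [← Finset.sum_mul, hRst.2 i, one_mul]
  _ < ε := by linarith
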